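/- The baseline-corrected term recovers the two-sample sum-and-sample form: for any s ∈ S^k, ∑_{s'∈S^k} p(s') R^{D\{s}}(S^k, s') f(s') = E_{b_2 ~ p(b_2 | S^k, b_1 = s)}[ p(s) f(s) + (1 − p(s)) f(b_2) ], where R^{D\{s}}(S^k, s) = 1 by convention. -/

import Mathlib

open Finset MeasureTheory

variable {α : Type*}

/-- Probability of drawing the ordered sample `B` sequentially without replacement
from (unnormalized) weights `p`, when `t` is the total remaining probability mass. -/
noncomputable def ordProb (p : α → ℝ) : ℝ → List α → ℝ
  | _, [] => 1
  | t, b :: L => (p b / t) * ordProb p (t - p b) L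

/-- Probability of drawing the unordered sample `S` without replacement:
sum of `ordProb` over all orderings of `S`. -/
noncomputable def setProb (p : α → ℝ) (t : ℝ) (S : Finset α) : ℝ :=
  (S.toList.permutations.map (ordProb p t)).sum

lemma ordProb_pos (p : α → ℝ) :
    ∀ (L : List α) (t : ℝ), (∀ x ∈ L, 0 < p x) → (L.map p).sum ≤ t → 0 < ordProb p t L
  | [], t, _, _ => by simp [ordProb]
  | b :: L, t, hp, hle => by
      have hb : 0 < p b := hp b (by simp)
      have hL : 0 ≤ (L.map p).sum := by
        apply List.sum_nonneg
        intro x hx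
        obtain ⟨y, hy, rfl⟩ := List.mem_map.1 hx
        exact (hp y (by simp [hy])).le
      have hsum : p b + (L.map p).sum ≤ t := by simpa using hle
      have ht : 0 < t := lt_of_lt_of_le (by linarith) hsum
      have hrec : 0 < ordProb p (t - p b) L :=
        ordProb_pos p L (t - p b) (fun x hx => hp x (by simp [hx])) (by linarith)
      have : 0 < p b / t := div_pos hb ht
      simpa [ordProb] using mul_pos this hrec

/-- `setProb` only depends on the underlying multiset. -/
lemma permsFinset_eq [DecidableEq α] {l l' : List α} (h : l.Perm l') :
    l.permutations.toFinset = l'.permutations.toFinset := by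
  ext π
  simp only [List.mem_toFinset, List.mem_permutations]
  exact ⟨fun h' => h'.trans h, fun h' => h'.trans h.symm⟩

lemma setProb_eq_sum [DecidableEq α] (p : α → ℝ) (t : ℝ) (S : Finset α) :
    setProb p t S = ∑ π ∈ S.toList.permutations.toFinset, ordProb p t π := by
  rw [setProb, ← List.sum_toFinset _ (List.nodup_permutations _ S.nodup_toList)]

lemma setProb_pos [DecidableEq α] (p : α → ℝ) (t : ℝ) (S : Finset α)
    (hp : ∀ x ∈ S, 0 < p x) (hle : ∑ x ∈ S, p x ≤ t) : 0 < setProb p t S := by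
  rw [setProb]
  have hne : S.toList.permutations ≠ [] := by
    intro h
    have : S.toList ∈ S.toList.permutations := List.mem_permutations.2 (List.Perm.refl _)
    simp [h] at this
  obtain ⟨π, hπ⟩ := List.exists_mem_of_ne_nil _ hne
  have key : ∀ π ∈ S.toList.permutations.map (ordProb p t), 0 < π := by
    intro x hx
    obtain ⟨π, hπ, rfl⟩ := List.mem_map.1 hx
    have hperm : π.Perm S.toList := List.mem_permutations.1 hπ
    apply ordProb_pos
    · intro y hy
      exact hp y (by simpa using hperm.mem_iff.1 hy)
    · rw [(hperm.map p).sum_eq, Finset.sum_map_toList]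
      exact hle
  apply List.sum_pos _ key
  simp only [ne_eq, List.map_eq_nil_iff]
  exact hne

lemma toList_erase_perm [DecidableEq α] (S : Finset α) (b : α) :
    ((S.erase b).toList).Perm (S.toList.erase b) := by
  refine Multiset.coe_eq_coe.1 ?_
  simp [Finset.coe_toList, ← Multiset.coe_erase]

/-- Key recursion for `setProb`: condition on the first element drawn. -/
lemma setProb_rec [DecidableEq α] (p : α → ℝ) (t : ℝ) (S : Finset α) (hS : S.Nonempty) :
    setProb p t S = ∑ b ∈ S, (p b / t) * setProb p (t - p b) (S.erase b) := by
  have hdecomp : S.toList.permutations.toFinset =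
      S.biUnion (fun b => ((S.erase b).toList.permutations.toFinset).image (b :: ·)) := by
    ext π
    simp only [List.mem_toFinset, List.mem_permutations, Finset.mem_biUnion, Finset.mem_image]
    constructor
    · intro hπ
      match π, hπ with
      | [], hπ =>
          exfalso
          have h0 : S.toList = [] := List.perm_nil.1 hπ.symm
          exact hS.ne_empty (Finset.toList_eq_nil.1 h0)
      | b :: L, hπ =>
          have hb : b ∈ S := by
            rw [← Finset.mem_toList]
            exact hπ.mem_iff.1 (by simp)
          refine ⟨b, hb, L, ?_, rfl⟩
          have h1 : L.Perm (S.toList.erase b) := by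
            have := hπ.erase b
            simpa using this
          have h2 : (S.toList.erase b).Perm ((S.erase b).toList) :=
            (toList_erase_perm S b).symm
          exact h1.trans h2
    · rintro ⟨b, hb, L, hL, rfl⟩
      have h2 : ((S.erase b).toList).Perm (S.toList.erase b) := toList_erase_perm S b
      have : (b :: L).Perm (b :: S.toList.erase b) := (hL.trans h2).cons b
      exact this.trans (List.perm_cons_erase (by simpa using hb)).symm
  rw [setProb_eq_sum, hdecomp, Finset.sum_biUnion]
  · apply Finset.sum_congr rfl
    intro b _
    rw [Finset.sum_image (by intro x _ y _ h; simpa using h)]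
    rw [setProb_eq_sum, Finset.mul_sum]
    apply Finset.sum_congr rfl
    intro π _
    rfl
  · intro b hb c hc hbc
    apply Finset.disjoint_left.2
    intro π hπ hπ'
    simp only [Finset.mem_image] at hπ hπ'
    obtain ⟨L, _, rfl⟩ := hπ
    obtain ⟨L', _, h⟩ := hπ'
    exact hbc (by injection h; simp_all)

theorem baseline_two_sample_form [DecidableEq α] (D S : Finset α) (hS : S ⊆ D)
    (hcard : 2 ≤ S.card) (s : α) (hs : s ∈ S) (p f : α → ℝ)
    (hp : ∀ x ∈ D, 0 < p x) (hsum : ∑ x ∈ D, p x = 1) :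
    ∑ s' ∈ S, p s' * (if s' = s then 1 else
        setProb p (1 - p s - p s') ((S.erase s).erase s')
          / setProb p (1 - p s) (S.erase s)) * f s'
      = ∑ s' ∈ S.erase s, (p s' / (1 - p s)) *
          (setProb p (1 - p s - p s') ((S.erase s).erase s')
            / setProb p (1 - p s) (S.erase s)) *
          (p s * f s + (1 - p s) * f s') := by
  set t : ℝ := 1 - p s with ht
  -- the erased set is nonempty
  have hne : (S.erase s).Nonempty := by
    rw [← Finset.card_pos, Finset.card_erase_of_mem hs]
    omega
  -- positivity of p on S
  have hpS : ∀ x ∈ S.erase s, 0 < p x := fun x hx => hp x (hS (Finset.mem_of_mem_erase hx))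
  -- sum bound: ∑_{S.erase s} p ≤ 1 - p s
  have hsub : S.erase s ⊆ D.erase s := Finset.erase_subset_erase s hS
  have hDsum : ∑ x ∈ D.erase s, p x = t := by
    rw [ht, ← hsum, Finset.sum_erase_eq_sub (hS hs)]
  have hle : ∑ x ∈ S.erase s, p x ≤ t := by
    rw [← hDsum]
    apply Finset.sum_le_sum_of_subset_of_nonneg hsub
    intro x hx _
    exact (hp x (Finset.mem_of_mem_erase hx)).le
  -- t > 0
  have ht0 : 0 < t := by
    obtain ⟨b, hb⟩ := hne
    calc (0 : ℝ) < p b := hpS b hb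
    _ ≤ ∑ x ∈ S.erase s, p x := Finset.single_le_sum (fun x hx => (hpS x hx).le) hb
    _ ≤ t := hle
  -- denominator positive
  have hden : 0 < setProb p t (S.erase s) := setProb_pos p t _ hpS hle
  -- key identity from recursion
  have hkey : ∑ s' ∈ S.erase s, p s' * setProb p (t - p s') ((S.erase s).erase s')
      = t * setProb p t (S.erase s) := by
    rw [setProb_rec p t (S.erase s) hne, Finset.mul_sum]
    apply Finset.sum_congr rfl
    intro b _
    field_simp
  -- split LHS at s
  rw [← Finset.add_sum_erase _ _ hs]
  simp only [if_pos rfl]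
  have hLHS : ∀ s' ∈ S.erase s, p s' * (if s' = s then 1 else
        setProb p (1 - p s - p s') ((S.erase s).erase s')
          / setProb p (1 - p s) (S.erase s)) * f s'
      = p s' * (setProb p (t - p s') ((S.erase s).erase s')
          / setProb p t (S.erase s)) * f s' := by
    intro s' hs'
    rw [if_neg (Finset.ne_of_mem_erase hs')]
  rw [Finset.sum_congr rfl hLHS]
  -- expand RHS
  have hRHS : ∑ s' ∈ S.erase s, (p s' / t) *
          (setProb p (t - p s') ((S.erase s).erase s')
            / setProb p t (S.erase s)) *
          (p s * f s + t * f s')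
      = (p s * f s / (t * setProb p t (S.erase s))) *
          (∑ s' ∈ S.erase s, p s' * setProb p (t - p s') ((S.erase s).erase s'))
        + ∑ s' ∈ S.erase s, p s' * (setProb p (t - p s') ((S.erase s).erase s')
            / setProb p t (S.erase s)) * f s' := by
    rw [Finset.mul_sum, ← Finset.sum_add_distrib]
    apply Finset.sum_congr rfl
    intro b _
    field_simp
  have harg : ∀ s' ∈ S.erase s, 1 - p s - p s' = t - p s' := by intro s' _; rw [ht]
  calc p s * 1 * f s + ∑ s' ∈ S.erase s, p s' * (setProb p (t - p s') ((S.erase s).erase s')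
          / setProb p t (S.erase s)) * f s'
      = (p s * f s / (t * setProb p t (S.erase s))) * (t * setProb p t (S.erase s))
        + ∑ s' ∈ S.erase s, p s' * (setProb p (t - p s') ((S.erase s).erase s')
            / setProb p t (S.erase s)) * f s' := by
        have h0 : t * setProb p t (S.erase s) ≠ 0 := by positivity
        rw [div_mul_cancel₀ _ h0, mul_one]
    _ = ∑ s' ∈ S.erase s, (p s' / t) *
          (setProb p (t - p s') ((S.erase s).erase s')
            / setProb p t (S.erase s)) *
          (p s * f s + t * f s') := by rw [hRHS, hkey]
    _ = _ := by
        apply Finset.sum_congr rfl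
        intro s' hs'
        rw [harg s' hs']
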